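/- Let n and m be non-parallel real unit vectors in ℝ³ (i.e., n ≠ m and n ≠ -m). Then every unitary 2×2 complex matrix U can be written as a global phase times a finite alternating product of rotations about n and m: there exist α ∈ ℝ, k ∈ ℕ, and real angles β₁, γ₁, …, β_k, γ_k such that U = e^{iα}·R_n(β₁)·R_m(γ₁)·⋯·R_n(β_k)·R_m(γ_k). -/

import Mathlib

open Matrix Complex
open scoped Real

noncomputable section

/-- The Pauli matrix σx. -/
def σx : Matrix (Fin 2) (Fin 2) ℂ := !![0, 1; 1, 0]

/-- The Pauli matrix σy. -/
def σy : Matrix (Fin 2) (Fin 2) ℂ := !![0, -Complex.I; Complex.I, 0]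

/-- The Pauli matrix σz. -/
def σz : Matrix (Fin 2) (Fin 2) ℂ := !![1, 0; 0, -1]

/-- `n·σ = a·σx + b·σy + c·σz` for a real vector `n = (a, b, c)`. -/
def dotσ (n : Fin 3 → ℝ) : Matrix (Fin 2) (Fin 2) ℂ :=
  (n 0 : ℂ) • σx + (n 1 : ℂ) • σy + (n 2 : ℂ) • σz

/-- The rotation `R_n(α) = cos(α/2)·I - i·sin(α/2)·(n·σ)`. -/
def Rot (n : Fin 3 → ℝ) (α : ℝ) : Matrix (Fin 2) (Fin 2) ℂ :=
  (Real.cos (α / 2) : ℂ) • (1 : Matrix (Fin 2) (Fin 2) ℂ)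
    - (Complex.I * (Real.sin (α / 2) : ℂ)) • dotσ n


lemma dotσ_eq (u : Fin 3 → ℝ) :
    dotσ u = !![(u 2 : ℂ), (u 0 : ℂ) - (u 1 : ℂ) * Complex.I;
                (u 0 : ℂ) + (u 1 : ℂ) * Complex.I, -(u 2 : ℂ)] := by
  ext i j
  fin_cases i <;> fin_cases j <;>
    simp [dotσ, σx, σy, σz] <;> ring

lemma dotσ_inj {u v : Fin 3 → ℝ} (h : dotσ u = dotσ v) : u = v := by
  rw [dotσ_eq, dotσ_eq] at h
  have h00 := congrFun (congrFun h 0) 0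
  have h01 := congrFun (congrFun h 0) 1
  have h10 := congrFun (congrFun h 1) 0
  simp [Complex.ext_iff] at h00 h01 h10
  funext i
  fin_cases i
  · exact h10.1
  · exact h10.2
  · exact h00

lemma dotσ_smul (r : ℝ) (u : Fin 3 → ℝ) : dotσ (r • u) = (r : ℂ) • dotσ u := by
  rw [dotσ_eq, dotσ_eq]
  ext i j
  fin_cases i <;> fin_cases j <;> simp <;> push_cast <;> ring

lemma dotσ_add (u v : Fin 3 → ℝ) : dotσ (u + v) = dotσ u + dotσ v := by
  rw [dotσ_eq, dotσ_eq, dotσ_eq]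
  ext i j
  fin_cases i <;> fin_cases j <;> simp <;> push_cast <;> ring

lemma dotσ_neg (u : Fin 3 → ℝ) : dotσ (-u) = - dotσ u := by
  rw [dotσ_eq, dotσ_eq]
  ext i j
  fin_cases i <;> fin_cases j <;> simp <;> push_cast <;> ring

lemma dotσ_mul (u v : Fin 3 → ℝ) :
    dotσ u * dotσ v = ((u ⬝ᵥ v : ℝ) : ℂ) • 1 + Complex.I • dotσ (u ⨯₃ v) := by
  rw [dotσ_eq, dotσ_eq, dotσ_eq, cross_apply]
  ext i j
  fin_cases i <;> fin_cases j <;>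
    simp [Matrix.mul_apply, Fin.sum_univ_two, dotProduct, Fin.sum_univ_three] <;>
    push_cast <;> ring_nf <;> simp [Complex.I_sq] <;> ring

lemma cross_cross_self (u p : Fin 3 → ℝ) :
    (u ⨯₃ p) ⨯₃ u = (u ⬝ᵥ u) • p - (u ⬝ᵥ p) • u := by
  funext i
  fin_cases i <;>
    simp [cross_apply, dotProduct, Fin.sum_univ_three] <;> ring

lemma dotσ_sq (u : Fin 3 → ℝ) (hu : u ⬝ᵥ u = 1) : dotσ u * dotσ u = 1 := by
  rw [dotσ_mul, hu, cross_self]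
  have : dotσ (0 : Fin 3 → ℝ) = 0 := by
    have := dotσ_smul 0 0; simpa using this
  simp [this]

lemma dotσ_mul_dotσ_mul (u p : Fin 3 → ℝ) (hu : u ⬝ᵥ u = 1) :
    dotσ u * dotσ p * dotσ u = ((2 * (u ⬝ᵥ p) : ℝ) : ℂ) • dotσ u - dotσ p := by
  rw [dotσ_mul, add_mul, smul_mul_assoc, one_mul, smul_mul_assoc, dotσ_mul]
  have h1 : (u ⨯₃ p) ⬝ᵥ u = 0 := by
    rw [dotProduct_comm]; simp
  rw [h1, cross_cross_self, hu, one_smul]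
  have h2 : dotσ (p - (u ⬝ᵥ p) • u) = dotσ p - ((u ⬝ᵥ p : ℝ) : ℂ) • dotσ u := by
    have := dotσ_add (p - (u ⬝ᵥ p) • u) ((u ⬝ᵥ p) • u)
    simp only [sub_add_cancel] at this
    rw [this, dotσ_smul]; abel
  rw [h2]
  simp only [smul_add, smul_sub, smul_smul, Complex.I_mul_I]
  push_cast
  match_scalars <;> ring_nf <;> (try simp only [Complex.I_sq]) <;> push_cast <;> ring

lemma conj_formula (u p : Fin 3 → ℝ) (hu : u ⬝ᵥ u = 1) (c s : ℝ) :
    ((c : ℂ) • 1 - (Complex.I * (s : ℂ)) • dotσ u) * dotσ p *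
      ((c : ℂ) • 1 + (Complex.I * (s : ℂ)) • dotσ u)
    = ((c^2 - s^2 : ℝ) : ℂ) • dotσ p + ((2*c*s : ℝ) : ℂ) • dotσ (u ⨯₃ p)
        + ((2*s^2*(u ⬝ᵥ p) : ℝ) : ℂ) • dotσ u := by
  have hAP : dotσ u * dotσ p = ((u ⬝ᵥ p : ℝ) : ℂ) • 1 + Complex.I • dotσ (u ⨯₃ p) :=
    dotσ_mul u p
  have hPA : dotσ p * dotσ u = ((u ⬝ᵥ p : ℝ) : ℂ) • 1 - Complex.I • dotσ (u ⨯₃ p) := by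
    rw [dotσ_mul, dotProduct_comm]
    rw [← cross_anticomm, dotσ_neg]
    module
  have hAPA := dotσ_mul_dotσ_mul u p hu
  calc ((c : ℂ) • 1 - (Complex.I * (s : ℂ)) • dotσ u) * dotσ p *
      ((c : ℂ) • 1 + (Complex.I * (s : ℂ)) • dotσ u)
      = ((c:ℂ)*(c:ℂ)) • dotσ p + ((c:ℂ)*(Complex.I * s)) • (dotσ p * dotσ u)
        - ((Complex.I * s)*(c:ℂ)) • (dotσ u * dotσ p)
        - ((Complex.I * s)*(Complex.I * s)) • (dotσ u * dotσ p * dotσ u) := by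
        simp only [sub_mul, mul_add, smul_mul_assoc, mul_smul_comm, one_mul, mul_one, smul_smul]
        rw [mul_assoc (dotσ u) (dotσ p) (dotσ u)]
        module
    _ = _ := by
        rw [hAPA, hPA, hAP]
        simp only [smul_add, smul_sub, smul_smul]
        push_cast
        match_scalars <;> ring_nf <;> (try simp only [Complex.I_sq]) <;> push_cast <;> ring

def rod (u : Fin 3 → ℝ) (θ : ℝ) (p : Fin 3 → ℝ) : Fin 3 → ℝ :=
  Real.cos θ • p + Real.sin θ • (u ⨯₃ p) + ((1 - Real.cos θ) * (u ⬝ᵥ p)) • u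

lemma dotσ_rod (u : Fin 3 → ℝ) (θ : ℝ) (p : Fin 3 → ℝ) :
    dotσ (rod u θ p) = ((Real.cos θ : ℝ) : ℂ) • dotσ p + ((Real.sin θ : ℝ) : ℂ) • dotσ (u ⨯₃ p)
      + (((1 - Real.cos θ) * (u ⬝ᵥ p) : ℝ) : ℂ) • dotσ u := by
  rw [rod, dotσ_add, dotσ_add, dotσ_smul, dotσ_smul, dotσ_smul]

lemma Rot_neg_mul (u : Fin 3 → ℝ) (hu : u ⬝ᵥ u = 1) (θ : ℝ) :
    Rot u θ * Rot u (-θ) = 1 := by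
  rw [Rot, Rot]
  have h1 : Real.cos (-θ / 2) = Real.cos (θ / 2) := by rw [neg_div, Real.cos_neg]
  have h2 : Real.sin (-θ / 2) = -Real.sin (θ / 2) := by rw [neg_div, Real.sin_neg]
  rw [h1, h2]
  have hsq := dotσ_sq u hu
  set c := Real.cos (θ/2); set s := Real.sin (θ/2)
  have hcs : c^2 + s^2 = 1 := by
    rw [add_comm]; exact Real.sin_sq_add_cos_sq _
  push_cast
  calc ((c:ℂ) • 1 - (Complex.I * s) • dotσ u) * ((c:ℂ) • 1 - (Complex.I * (-s:ℂ)) • dotσ u)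
      = ((c:ℂ)*(c:ℂ)) • 1 + ((Complex.I*s)*(Complex.I*(-s:ℂ))) • (dotσ u * dotσ u) := by
        simp only [sub_mul, mul_sub, smul_mul_assoc, mul_smul_comm, one_mul, mul_one, smul_smul]
        module
    _ = 1 := by
        rw [hsq]
        have key : ((c:ℂ)*(c:ℂ)) + ((Complex.I*s)*(Complex.I*(-s:ℂ))) = 1 := by
          have hc : ((c:ℂ))^2 + ((s:ℂ))^2 = 1 := by exact_mod_cast congrArg (fun x : ℝ => (x:ℂ)) hcs
          linear_combination hc - ((s:ℂ))^2 * Complex.I_sq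
        rw [← add_smul, key, one_smul]

lemma Rot_neg (u : Fin 3 → ℝ) (θ : ℝ) :
    Rot u (-θ) = (Real.cos (θ/2) : ℂ) • 1 + (Complex.I * (Real.sin (θ/2) : ℂ)) • dotσ u := by
  rw [Rot, neg_div, Real.cos_neg, Real.sin_neg]
  push_cast
  module

lemma Rot_conj (u p : Fin 3 → ℝ) (hu : u ⬝ᵥ u = 1) (θ : ℝ) :
    Rot u θ * dotσ p * Rot u (-θ) = dotσ (rod u θ p) := by
  rw [Rot_neg, Rot, dotσ_rod]
  have := conj_formula u p hu (Real.cos (θ/2)) (Real.sin (θ/2))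
  rw [this]
  have hd : θ = 2 * (θ/2) := by ring
  have hpy : Real.cos (θ/2)^2 + Real.sin (θ/2)^2 = 1 := by
    rw [add_comm]; exact Real.sin_sq_add_cos_sq _
  have hc2 : Real.cos (θ/2)^2 - Real.sin (θ/2)^2 = Real.cos θ := by
    have := Real.cos_two_mul (θ/2)
    rw [← hd] at this
    linarith
  have hs2 : 2 * Real.cos (θ/2) * Real.sin (θ/2) = Real.sin θ := by
    have := Real.sin_two_mul (θ/2)
    rw [← hd] at this
    linarith
  have h1c : (2 * Real.sin (θ/2)^2 * (u ⬝ᵥ p) : ℝ) = (1 - Real.cos θ) * (u ⬝ᵥ p) := by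
    have := Real.cos_two_mul (θ/2)
    rw [← hd] at this
    linear_combination (u ⬝ᵥ p) * this + 2*(u ⬝ᵥ p)*hpy
  rw [hc2, hs2, h1c]

lemma dotσ_sq' (v : Fin 3 → ℝ) : dotσ v * dotσ v = ((v ⬝ᵥ v : ℝ) : ℂ) • 1 := by
  rw [dotσ_mul, cross_self]
  have : dotσ (0 : Fin 3 → ℝ) = 0 := by have := dotσ_smul 0 0; simpa using this
  simp [this]

lemma neg_Rot_mul (u : Fin 3 → ℝ) (hu : u ⬝ᵥ u = 1) (θ : ℝ) :
    Rot u (-θ) * Rot u θ = 1 := by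
  have := Rot_neg_mul u hu (-θ)
  rwa [neg_neg] at this

lemma rod_unit (u p : Fin 3 → ℝ) (hu : u ⬝ᵥ u = 1) (θ : ℝ) (hp : p ⬝ᵥ p = 1) :
    rod u θ p ⬝ᵥ rod u θ p = 1 := by
  have h1 : dotσ (rod u θ p) * dotσ (rod u θ p)
      = ((rod u θ p ⬝ᵥ rod u θ p : ℝ) : ℂ) • 1 := dotσ_sq' _
  have h2 : dotσ (rod u θ p) * dotσ (rod u θ p) = 1 := by
    rw [← Rot_conj u p hu θ]
    have e : Rot u θ * dotσ p * Rot u (-θ) * (Rot u θ * dotσ p * Rot u (-θ))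
        = Rot u θ * (dotσ p * (Rot u (-θ) * Rot u θ) * dotσ p) * Rot u (-θ) := by
      simp only [mul_assoc]
    rw [e, neg_Rot_mul u hu θ, mul_one, dotσ_sq' p, hp]
    simp [Rot_neg_mul u hu θ, ← mul_assoc, mul_smul_comm, smul_mul_assoc]
  rw [h2] at h1
  have := congrFun (congrFun h1.symm 0) 0
  simpa using (Complex.ofReal_inj.mp (by simpa using this.symm)).symm

lemma rod_inverse (u p : Fin 3 → ℝ) (hu : u ⬝ᵥ u = 1) (θ : ℝ) :
    rod u (-θ) (rod u θ p) = p := by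
  apply dotσ_inj
  have h1 := Rot_conj u (rod u θ p) hu (-θ)
  rw [neg_neg, ← Rot_conj u p hu θ] at h1
  rw [← h1]
  have e : Rot u (-θ) * (Rot u θ * dotσ p * Rot u (-θ)) * Rot u θ
      = (Rot u (-θ) * Rot u θ) * dotσ p * (Rot u (-θ) * Rot u θ) := by simp only [mul_assoc]
  rw [e, neg_Rot_mul u hu θ]
  simp

lemma rod_dot (u p v : Fin 3 → ℝ) (θ : ℝ) :
    rod u θ p ⬝ᵥ v = Real.cos θ * (p ⬝ᵥ v) + Real.sin θ * ((u ⨯₃ p) ⬝ᵥ v)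
      + (1 - Real.cos θ) * (u ⬝ᵥ p) * (u ⬝ᵥ v) := by
  simp [rod, add_dotProduct, smul_dotProduct]
  try ring

lemma rod_axis_dot (u p : Fin 3 → ℝ) (hu : u ⬝ᵥ u = 1) (θ : ℝ) :
    rod u θ p ⬝ᵥ u = p ⬝ᵥ u := by
  rw [rod_dot]
  have h1 : (u ⨯₃ p) ⬝ᵥ u = 0 := by rw [dotProduct_comm]; simp
  rw [h1, hu, dotProduct_comm u p]
  ring

lemma rod_neg_axis (u p : Fin 3 → ℝ) (θ : ℝ) : rod (-u) θ p = rod u (-θ) p := by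
  funext i
  fin_cases i <;>
    simp [rod, cross_apply, dotProduct, Fin.sum_univ_three, Real.cos_neg, Real.sin_neg] <;> ring

lemma Rot_zero (u : Fin 3 → ℝ) : Rot u 0 = 1 := by
  simp [Rot]

lemma Rot_two_pi (u : Fin 3 → ℝ) : Rot u (2*π) = -1 := by
  have : (2*π)/2 = π := by ring
  rw [Rot, this]
  simp

lemma Rot_neg_axis (u : Fin 3 → ℝ) (θ : ℝ) : Rot (-u) θ = Rot u (-θ) := by
  rw [Rot, Rot, dotσ_neg, neg_div, Real.cos_neg, Real.sin_neg]
  push_cast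
  module

lemma triple_sq (u p v : Fin 3 → ℝ) (hu : u ⬝ᵥ u = 1) (hp : p ⬝ᵥ p = 1) (hv : v ⬝ᵥ v = 1) :
    ((p ⬝ᵥ v) - (u ⬝ᵥ p) * (u ⬝ᵥ v))^2 + ((u ⨯₃ p) ⬝ᵥ v)^2
      = (1 - (u ⬝ᵥ p)^2) * (1 - (u ⬝ᵥ v)^2) := by
  have tident : ((u ⨯₃ p) ⬝ᵥ v)^2
      = (u ⬝ᵥ u)*((p ⬝ᵥ p)*(v ⬝ᵥ v) - (p ⬝ᵥ v)^2)
        - (u ⬝ᵥ p)*((u ⬝ᵥ p)*(v ⬝ᵥ v) - (p ⬝ᵥ v)*(u ⬝ᵥ v))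
        + (u ⬝ᵥ v)*((u ⬝ᵥ p)*(p ⬝ᵥ v) - (p ⬝ᵥ p)*(u ⬝ᵥ v)) := by
    simp only [cross_apply, dotProduct, Fin.sum_univ_three, Matrix.cons_val_zero,
      Matrix.cons_val_one, Matrix.head_cons, Matrix.cons_val_two, Matrix.tail_cons]
    ring
  linear_combination tident + ((p ⬝ᵥ p)*(v ⬝ᵥ v) - (p ⬝ᵥ v)^2) * hu
    + ((v ⬝ᵥ v) - (u ⬝ᵥ v)^2) * hp + (1 - (u ⬝ᵥ p)^2) * hv

lemma dot_le_one (p q : Fin 3 → ℝ) (hp : p ⬝ᵥ p = 1) (hq : q ⬝ᵥ q = 1) :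
    |p ⬝ᵥ q| ≤ 1 := by
  simp only [dotProduct, Fin.sum_univ_three] at *
  rw [abs_le]
  constructor <;> nlinarith [sq_nonneg (p 0 + q 0), sq_nonneg (p 1 + q 1), sq_nonneg (p 2 + q 2),
    sq_nonneg (p 0 - q 0), sq_nonneg (p 1 - q 1), sq_nonneg (p 2 - q 2)]

lemma eq_of_unit_dot_one (p q : Fin 3 → ℝ) (hp : p ⬝ᵥ p = 1) (hq : q ⬝ᵥ q = 1)
    (h : p ⬝ᵥ q = 1) : p = q := by
  simp only [dotProduct, Fin.sum_univ_three] at *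
  have h0 : (p 0 - q 0)^2 + (p 1 - q 1)^2 + (p 2 - q 2)^2 = 0 := by
    linear_combination hp + hq - 2*h
  have s0 : p 0 = q 0 := by
    have : (p 0 - q 0)^2 = 0 := le_antisymm (by nlinarith [sq_nonneg (p 1 - q 1), sq_nonneg (p 2 - q 2)]) (sq_nonneg _)
    have := pow_eq_zero_iff (n := 2) (by norm_num) |>.mp this
    linarith
  have s1 : p 1 = q 1 := by
    have : (p 1 - q 1)^2 = 0 := le_antisymm (by nlinarith [sq_nonneg (p 0 - q 0), sq_nonneg (p 2 - q 2)]) (sq_nonneg _)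
    have := pow_eq_zero_iff (n := 2) (by norm_num) |>.mp this
    linarith
  have s2 : p 2 = q 2 := by
    have : (p 2 - q 2)^2 = 0 := le_antisymm (by nlinarith [sq_nonneg (p 0 - q 0), sq_nonneg (p 1 - q 1)]) (sq_nonneg _)
    have := pow_eq_zero_iff (n := 2) (by norm_num) |>.mp this
    linarith
  funext i
  fin_cases i
  · exact s0
  · exact s1
  · exact s2

lemma circle_reach (b c t : ℝ) (h1 : t^2 ≤ b^2 + c^2) :
    ∃ φ : ℝ, b * Real.cos φ + c * Real.sin φ = t := by
  by_cases hA : b^2 + c^2 = 0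
  · have hb : b = 0 := by nlinarith
    have hc : c = 0 := by nlinarith
    have ht : t = 0 := by nlinarith
    exact ⟨0, by simp [hb, hc, ht]⟩
  · have hApos : 0 < b^2 + c^2 := lt_of_le_of_ne (by positivity) (Ne.symm hA)
    set A := Real.sqrt (b^2 + c^2) with hAdef
    have hA0 : 0 < A := Real.sqrt_pos.mpr hApos
    have hAsq : A^2 = b^2 + c^2 := Real.sq_sqrt (le_of_lt hApos)
    set z : ℂ := ⟨b, c⟩ with hz
    have hzne : z ≠ 0 := by
      intro hcon
      rw [Complex.ext_iff] at hcon
      simp [hz] at hcon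
      exact hA (by rw [hcon.1, hcon.2]; ring)
    have habs : ‖z‖ = A := by
      rw [Complex.norm_def, Complex.normSq_apply]
      simp [hz, hAdef]
      ring_nf
    have hcos : Real.cos z.arg = b / A := by rw [Complex.cos_arg hzne, habs]
    have hsin : Real.sin z.arg = c / A := by rw [Complex.sin_arg, habs]
    -- f(arg z) = A, f(arg z + π) = -A
    have f1 : b * Real.cos z.arg + c * Real.sin z.arg = A := by
      rw [hcos, hsin]
      field_simp
      nlinarith [hAsq]
    have f2 : b * Real.cos (z.arg + π) + c * Real.sin (z.arg + π) = -A := by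
      rw [Real.cos_add_pi, Real.sin_add_pi, hcos, hsin]
      field_simp
      nlinarith [hAsq]
    have htA : |t| ≤ A := by
      rw [← Real.sqrt_sq_eq_abs, hAdef]
      exact Real.sqrt_le_sqrt h1
    have hcont : Continuous fun φ : ℝ => b * Real.cos φ + c * Real.sin φ := by
      continuity
    have hsub : Set.Icc (-A) A ⊆ (fun φ => b * Real.cos φ + c * Real.sin φ) ''
        Set.Icc z.arg (z.arg + π) := by
      have := intermediate_value_Icc' (a := z.arg) (b := z.arg + π)
        (by linarith [Real.pi_pos]) (hcont.continuousOn)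
      rw [f1, f2] at this
      exact this
    have : t ∈ Set.Icc (-A) A := by
      rw [Set.mem_Icc]
      rw [abs_le] at htA
      exact htA
    obtain ⟨φ, _, hφ⟩ := hsub this
    exact ⟨φ, hφ⟩

lemma reach (u p v : Fin 3 → ℝ) (hu : u ⬝ᵥ u = 1) (hp : p ⬝ᵥ p = 1) (hv : v ⬝ᵥ v = 1)
    (t : ℝ) (h : ((u ⬝ᵥ p) * (u ⬝ᵥ v) - t)^2 ≤ (1 - (u ⬝ᵥ p)^2) * (1 - (u ⬝ᵥ v)^2)) :
    ∃ φ : ℝ, rod u φ p ⬝ᵥ v = t := by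
  set a : ℝ := (u ⬝ᵥ p) * (u ⬝ᵥ v) with ha
  set b : ℝ := (p ⬝ᵥ v) - a with hb
  set c : ℝ := (u ⨯₃ p) ⬝ᵥ v with hc
  have hbc : b^2 + c^2 = (1 - (u ⬝ᵥ p)^2) * (1 - (u ⬝ᵥ v)^2) := triple_sq u p v hu hp hv
  have h2 : (t - a)^2 ≤ b^2 + c^2 := by
    rw [hbc]
    calc (t-a)^2 = (a - t)^2 := by ring
      _ ≤ _ := h
  obtain ⟨φ, hφ⟩ := circle_reach b c (t - a) h2
  refine ⟨φ, ?_⟩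
  rw [rod_dot]
  have : Real.cos φ * (p ⬝ᵥ v) + Real.sin φ * ((u ⨯₃ p) ⬝ᵥ v)
      + (1 - Real.cos φ) * (u ⬝ᵥ p) * (u ⬝ᵥ v)
      = a + (b * Real.cos φ + c * Real.sin φ) := by
    rw [hb, hc, ha]; ring
  rw [this, hφ]; ring

section TwoAxes

variable (n m : Fin 3 → ℝ)

def RotProd (l : List (ℝ × ℝ)) : Matrix (Fin 2) (Fin 2) ℂ :=
  (l.map (fun p => Rot n p.1 * Rot m p.2)).prod

lemma RotProd_nil : RotProd n m [] = 1 := rfl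

lemma RotProd_append (l₁ l₂ : List (ℝ × ℝ)) :
    RotProd n m (l₁ ++ l₂) = RotProd n m l₁ * RotProd n m l₂ := by
  simp [RotProd]

def IsProd (W : Matrix (Fin 2) (Fin 2) ℂ) : Prop := ∃ l : List (ℝ × ℝ), W = RotProd n m l

def Orb (p : Fin 3 → ℝ) : Prop :=
  ∃ W W' : Matrix (Fin 2) (Fin 2) ℂ, IsProd n m W ∧ IsProd n m W' ∧
    W * W' = 1 ∧ W' * W = 1 ∧ dotσ p = W * dotσ n * W'

lemma IsProd_one : IsProd n m 1 := ⟨[], rfl⟩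

lemma IsProd_mul {W V : Matrix (Fin 2) (Fin 2) ℂ} (hW : IsProd n m W) (hV : IsProd n m V) :
    IsProd n m (W * V) := by
  obtain ⟨l₁, rfl⟩ := hW
  obtain ⟨l₂, rfl⟩ := hV
  exact ⟨l₁ ++ l₂, (RotProd_append n m l₁ l₂).symm⟩

lemma IsProd_Rot_n (β : ℝ) : IsProd n m (Rot n β) := by
  refine ⟨[(β, 0)], ?_⟩
  simp [RotProd, Rot_zero]

lemma IsProd_Rot_m (γ : ℝ) : IsProd n m (Rot m γ) := by
  refine ⟨[(0, γ)], ?_⟩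
  simp [RotProd, Rot_zero]

lemma Orb_base : Orb n m n := by
  refine ⟨1, 1, IsProd_one n m, IsProd_one n m, by simp, by simp, by simp⟩

lemma Orb_rod {p : Fin 3 → ℝ} (hp : Orb n m p) (u : Fin 3 → ℝ) (hu : u ⬝ᵥ u = 1)
    (hR : ∀ θ : ℝ, IsProd n m (Rot u θ)) (θ : ℝ) : Orb n m (rod u θ p) := by
  obtain ⟨W, W', h1, h2, h3, h4, h5⟩ := hp
  have e1 : Rot u θ * W * (W' * Rot u (-θ)) = 1 := by
    have : Rot u θ * W * (W' * Rot u (-θ)) = Rot u θ * (W * W') * Rot u (-θ) := by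
      simp only [mul_assoc]
    rw [this, h3, mul_one, Rot_neg_mul u hu]
  have e2 : W' * Rot u (-θ) * (Rot u θ * W) = 1 := by
    have : W' * Rot u (-θ) * (Rot u θ * W) = W' * (Rot u (-θ) * Rot u θ) * W := by
      simp only [mul_assoc]
    rw [this, neg_Rot_mul u hu, mul_one, h4]
  refine ⟨Rot u θ * W, W' * Rot u (-θ), IsProd_mul n m (hR θ) h1,
    IsProd_mul n m h2 (hR (-θ)), e1, e2, ?_⟩
  rw [← Rot_conj u p hu θ, h5]
  simp only [mul_assoc]

end TwoAxes

lemma cos_ge_aux {x α : ℝ} (h0 : 0 ≤ α) (hπ : α ≤ π) (h1 : α ≤ x) (h2 : x + α ≤ 2*π) :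
    Real.cos x ≤ Real.cos α := by
  by_cases hx : x ≤ π
  · exact Real.cos_le_cos_of_nonneg_of_le_pi h0 hx h1
  · push_neg at hx
    have e : Real.cos x = Real.cos (2*π - x) := by
      rw [Real.cos_two_pi_sub]
    rw [e]
    exact Real.cos_le_cos_of_nonneg_of_le_pi h0 (by linarith) (by linarith)

lemma nonparallel_dot (n m : Fin 3 → ℝ) (hn : n ⬝ᵥ n = 1) (hm : m ⬝ᵥ m = 1)
    (h1 : n ≠ m) (h2 : n ≠ -m) : |n ⬝ᵥ m| < 1 := by
  rcases lt_or_eq_of_le (dot_le_one n m hn hm) with h | h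
  · exact h
  · exfalso
    rw [abs_eq (by norm_num : (0:ℝ) ≤ 1)] at h
    rcases h with h | h
    · exact h1 (eq_of_unit_dot_one n m hn hm h)
    · apply h2
      apply eq_of_unit_dot_one n (-m) hn (by simpa using hm)
      simp [dotProduct_neg, h]

theorem orbit (n m : Fin 3 → ℝ) (hn : n ⬝ᵥ n = 1) (hm : m ⬝ᵥ m = 1)
    (hnm : |n ⬝ᵥ m| < 1) : ∀ p : Fin 3 → ℝ, p ⬝ᵥ p = 1 → Orb n m p := by
  set c : ℝ := n ⬝ᵥ m with hc
  set mh : Fin 3 → ℝ := if 0 ≤ c then m else -m with hmh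
  have hmhu : mh ⬝ᵥ mh = 1 := by
    rw [hmh]; split <;> simpa using hm
  have hnmh : n ⬝ᵥ mh = |c| := by
    rw [hmh]; split_ifs with h
    · rw [_root_.abs_of_nonneg h]
    · rw [_root_.abs_of_neg (not_le.mp h), dotProduct_neg]
  have habs : |c| < 1 := hnm
  have habs0 : (0:ℝ) ≤ |c| := abs_nonneg c
  set θ0 : ℝ := Real.arccos |c| with hθ0
  have hθ0pos : 0 < θ0 := Real.arccos_pos.mpr habs
  have hθ0le : θ0 ≤ π/2 := (Real.arccos_le_pi_div_two).mpr habs0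
  have hcosθ0 : Real.cos θ0 = |c| := Real.cos_arccos (by linarith) (le_of_lt habs)
  have hsinθ0 : 0 ≤ Real.sin θ0 :=
    Real.sin_nonneg_of_nonneg_of_le_pi (Real.arccos_nonneg _) (by linarith [Real.pi_pos])
  have hRn : ∀ θ : ℝ, IsProd n m (Rot n θ) := fun θ => IsProd_Rot_n n m θ
  have hRmh : ∀ θ : ℝ, IsProd n m (Rot mh θ) := by
    intro θ
    rw [hmh]; split
    · exact IsProd_Rot_m n m θ
    · rw [Rot_neg_axis]
      exact IsProd_Rot_m n m (-θ)
  have step : ∀ j : ℕ, ∀ p : Fin 3 → ℝ, p ⬝ᵥ p = 1 →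
      Real.arccos (p ⬝ᵥ n) ≤ 2*j*θ0 → Orb n m p := by
    intro j
    induction j with
    | zero =>
      intro p hp hj
      simp only [Nat.cast_zero] at hj
      have h0 : Real.arccos (p ⬝ᵥ n) = 0 :=
        le_antisymm (by linarith) (Real.arccos_nonneg _)
      have hb := dot_le_one p n hp hn
      rw [abs_le] at hb
      have : p ⬝ᵥ n = 1 := by
        have := Real.cos_arccos hb.1 hb.2
        rw [h0, Real.cos_zero] at this
        linarith
      rw [eq_of_unit_dot_one p n hp hn this]
      exact Orb_base n m
    | succ j ih =>
      intro p hp hj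
      set P : ℝ := p ⬝ᵥ n with hP
      have hb := dot_le_one p n hp hn
      rw [abs_le] at hb
      set ρ : ℝ := Real.arccos P with hρ
      have hρ0 : 0 ≤ ρ := Real.arccos_nonneg _
      have hρπ : ρ ≤ π := Real.arccos_le_pi _
      have hcosρ : Real.cos ρ = P := Real.cos_arccos hb.1 hb.2
      have hsinρ : 0 ≤ Real.sin ρ := Real.sin_nonneg_of_nonneg_of_le_pi hρ0 hρπ
      set α : ℝ := max θ0 (ρ - θ0) with hα
      have hαθ0 : θ0 ≤ α := le_max_left _ _
      have hα0 : 0 ≤ α := le_trans (le_of_lt hθ0pos) hαθ0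
      have hαπ : α ≤ π := by
        apply max_le (by linarith [Real.pi_pos]) (by linarith)
      have hsinα : 0 ≤ Real.sin α := Real.sin_nonneg_of_nonneg_of_le_pi hα0 hαπ
      have hcosαρ : Real.cos α ≤ Real.cos (ρ - θ0) := by
        rcases le_total θ0 ρ with h | h
        · exact Real.cos_le_cos_of_nonneg_of_le_pi (by linarith) hαπ (le_max_right _ _)
        · rw [← Real.cos_neg (ρ - θ0)]
          have : -(ρ - θ0) = θ0 - ρ := by ring
          rw [this]
          exact Real.cos_le_cos_of_nonneg_of_le_pi (by linarith) hαπ (by linarith)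
      have hcosαρ' : Real.cos (ρ + θ0) ≤ Real.cos α := by
        apply cos_ge_aux hα0 hαπ
        · apply max_le (by linarith) (by linarith)
        · have h2π : α + (ρ + θ0) ≤ 2*π := by
            rcases max_cases θ0 (ρ - θ0) with ⟨he, _⟩ | ⟨he, _⟩ <;> rw [hα, he] <;>
              linarith [Real.pi_pos]
          linarith
      -- substep 1
      have hreach1 : ∃ φ : ℝ, rod n φ p ⬝ᵥ mh = Real.cos α := by
        apply reach n p mh hn hp hmhu
        have e1 : Real.cos (ρ + θ0) = Real.cos ρ * Real.cos θ0 - Real.sin ρ * Real.sin θ0 :=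
          Real.cos_add ρ θ0
        have e2 : Real.cos (ρ - θ0) = Real.cos ρ * Real.cos θ0 + Real.sin ρ * Real.sin θ0 :=
          Real.cos_sub ρ θ0
        have hdp : n ⬝ᵥ p = P := by rw [dotProduct_comm]
        rw [hdp, hnmh, ← hcosθ0, ← hcosρ]
        have hsq : (Real.cos ρ * Real.cos θ0 - Real.cos α)^2 ≤ (Real.sin ρ * Real.sin θ0)^2 := by
          apply sq_le_sq'
          · linarith
          · linarith
        calc (Real.cos ρ * Real.cos θ0 - Real.cos α)^2 ≤ (Real.sin ρ * Real.sin θ0)^2 := hsq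
          _ = (1 - Real.cos ρ^2) * (1 - Real.cos θ0^2) := by
              rw [mul_pow, Real.sin_sq, Real.sin_sq]
          _ ≤ (1 - Real.cos ρ^2) * (1 - Real.cos θ0^2) := le_refl _
      obtain ⟨φ, hφ⟩ := hreach1
      set p' : Fin 3 → ℝ := rod n φ p with hp'def
      have hp'u : p' ⬝ᵥ p' = 1 := rod_unit n p hn φ hp
      have hp'n : p' ⬝ᵥ n = P := by
        rw [hp'def, rod_axis_dot n p hn φ]
      -- substep 2
      have hreach2 : ∃ ψ : ℝ, rod mh ψ p' ⬝ᵥ n = Real.cos (α - θ0) := by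
        apply reach mh p' n hmhu hp'u hn
        have hd1 : mh ⬝ᵥ p' = Real.cos α := by rw [dotProduct_comm]; exact hφ
        have hd2 : mh ⬝ᵥ n = Real.cos θ0 := by rw [dotProduct_comm, hnmh, hcosθ0]
        rw [hd1, hd2, Real.cos_sub]
        have : Real.cos α * Real.cos θ0 - (Real.cos α * Real.cos θ0
            + Real.sin α * Real.sin θ0) = -(Real.sin α * Real.sin θ0) := by ring
        rw [this]
        rw [neg_pow, mul_pow, Real.sin_sq, Real.sin_sq]
        simp [neg_one_mul]
      obtain ⟨ψ, hψ⟩ := hreach2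
      set q : Fin 3 → ℝ := rod mh ψ p' with hqdef
      have hqu : q ⬝ᵥ q = 1 := rod_unit mh p' hmhu ψ hp'u
      have hOrbq : Orb n m q := by
        apply ih q hqu
        have : Real.arccos (q ⬝ᵥ n) = α - θ0 := by
          rw [hqdef, hψ]
          exact Real.arccos_cos (by linarith) (by linarith)
        rw [this]
        have hj0 : (0:ℝ) ≤ 2*(j:ℝ)*θ0 := by positivity
        rcases max_cases θ0 (ρ - θ0) with ⟨he, _⟩ | ⟨he, _⟩ <;> rw [hα, he] <;>
          push_cast at hj ⊢ <;> linarith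
      -- go back
      have hback1 : p' = rod mh (-ψ) q := by
        rw [hqdef, rod_inverse mh p' hmhu ψ]
      have hback2 : p = rod n (-φ) p' := by
        rw [hp'def, rod_inverse n p hn φ]
      rw [hback2, hback1]
      exact Orb_rod n m (Orb_rod n m hOrbq mh hmhu hRmh (-ψ)) n hn hRn (-φ)
  intro p hp
  obtain ⟨j, hj⟩ := exists_nat_ge (π / (2*θ0))
  apply step j p hp
  have h2θ : 0 < 2*θ0 := by linarith
  have : π ≤ 2*θ0*j := by
    rw [div_le_iff₀ h2θ] at hj
    linarith
  calc Real.arccos (p ⬝ᵥ n) ≤ π := Real.arccos_le_pi _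
    _ ≤ 2*θ0*j := this
    _ = 2*j*θ0 := by ring

lemma Orb_Rot (n m p : Fin 3 → ℝ) (h : Orb n m p) (ψ : ℝ) :
    IsProd n m (Rot p ψ) := by
  obtain ⟨W, W', h1, h2, h3, h4, h5⟩ := h
  have key : Rot p ψ = W * Rot n ψ * W' := by
    rw [Rot, Rot, h5]
    simp only [mul_sub, sub_mul, mul_smul_comm, smul_mul_assoc, mul_one, one_mul]
    rw [h3]
  rw [key]
  exact IsProd_mul n m (IsProd_mul n m h1 (IsProd_Rot_n n m ψ)) h2

lemma su2_entry_helper (w x y z r : ℝ) (hrne : r ≠ 0) :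
    ((w : ℝ) : ℂ) • (1 : Matrix (Fin 2) (Fin 2) ℂ)
        - (Complex.I * ((r : ℝ) : ℂ)) • !![((z/r : ℝ) : ℂ), ((x/r : ℝ) : ℂ) - ((y/r : ℝ) : ℂ) * Complex.I;
        ((x/r : ℝ) : ℂ) + ((y/r : ℝ) : ℂ) * Complex.I, -((z/r : ℝ) : ℂ)]
        = !![(w:ℂ) - (z:ℂ)*Complex.I, -(y:ℂ) - (x:ℂ)*Complex.I;
             (y:ℂ) - (x:ℂ)*Complex.I, (w:ℂ) + (z:ℂ)*Complex.I] := by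
  have hrC : (r : ℂ) ≠ 0 := by exact_mod_cast hrne
  ext i j
  fin_cases i <;> fin_cases j <;>
    simp only [Matrix.smul_apply, Matrix.sub_apply, Matrix.one_apply,
      Matrix.cons_val', Matrix.cons_val_zero, Matrix.cons_val_one, Matrix.head_cons,
      Matrix.empty_val', Matrix.cons_val_fin_one, Matrix.head_fin_const, smul_eq_mul, Matrix.of_apply] <;>
    push_cast <;> field_simp <;> ring_nf <;> (try rw [Complex.I_sq]) <;> (try push_cast) <;> ring

lemma su2_param (V : Matrix (Fin 2) (Fin 2) ℂ) (h1 : Vᴴ * V = 1) (hdet : V.det = 1) :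
    ∃ (p : Fin 3 → ℝ) (ψ : ℝ), p ⬝ᵥ p = 1 ∧ V = Rot p ψ := by
  set a := V 0 0 with ha
  set b := V 0 1 with hb
  set cc := V 1 0 with hcc
  set d := V 1 1 with hd
  have e00 : (starRingEnd ℂ) a * a + (starRingEnd ℂ) cc * cc = 1 := by
    have := congrFun (congrFun h1 0) 0
    simpa [Matrix.mul_apply, Fin.sum_univ_two, Matrix.conjTranspose_apply, Matrix.one_apply] using this
  have e01 : (starRingEnd ℂ) a * b + (starRingEnd ℂ) cc * d = 0 := by
    have := congrFun (congrFun h1 0) 1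
    simpa [Matrix.mul_apply, Fin.sum_univ_two, Matrix.conjTranspose_apply, Matrix.one_apply] using this
  have e10 : (starRingEnd ℂ) b * a + (starRingEnd ℂ) d * cc = 0 := by
    have := congrFun (congrFun h1 1) 0
    simpa [Matrix.mul_apply, Fin.sum_univ_two, Matrix.conjTranspose_apply, Matrix.one_apply] using this
  have e11 : (starRingEnd ℂ) b * b + (starRingEnd ℂ) d * d = 1 := by
    have := congrFun (congrFun h1 1) 1
    simpa [Matrix.mul_apply, Fin.sum_univ_two, Matrix.conjTranspose_apply, Matrix.one_apply] using this
  have edet : a * d - b * cc = 1 := by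
    have := Matrix.det_fin_two V
    rw [hdet] at this
    rw [← ha, ← hb, ← hcc, ← hd] at this
    linear_combination -this
  have hda : d = (starRingEnd ℂ) a := by
    linear_combination (-d) * e00 + cc * e01 + (starRingEnd ℂ) a * edet
  have hcb : cc = -(starRingEnd ℂ) b := by
    linear_combination (-(starRingEnd ℂ) b) * edet + d * e10 - cc * e11
  set w := a.re with hw
  set z := -a.im with hz
  set y := -b.re with hy
  set x := -b.im with hx
  have hnorm : w^2 + x^2 + y^2 + z^2 = 1 := by
    have e00' : (starRingEnd ℂ) a * a + b * (starRingEnd ℂ) b = 1 := by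
      rw [hcb] at e00
      simp only [map_neg, Complex.conj_conj] at e00
      linear_combination e00
    have hre := congrArg Complex.re e00'
    simp [Complex.add_re, Complex.mul_re, Complex.conj_re, Complex.conj_im, Complex.one_re] at hre
    rw [hw, hx, hy, hz]
    nlinarith [hre]
  have hVmat : V = !![a, b; cc, d] := by
    ext i j
    fin_cases i <;> fin_cases j <;> simp [ha, hb, hcc, hd]
  have haw : a = (w : ℂ) - (z : ℂ) * Complex.I := by
    rw [Complex.ext_iff]
    constructor <;> simp [hw, hz]
  have hbw : b = -(y : ℂ) - (x : ℂ) * Complex.I := by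
    rw [Complex.ext_iff]
    constructor <;> simp [hy, hx]
  clear_value a b cc d w z y x
  clear h1 hdet e00 e01 e10 e11 ha hb hcc hd
  by_cases h0 : x^2 + y^2 + z^2 = 0
  · have hx0 : x = 0 := by nlinarith [sq_nonneg x, sq_nonneg y, sq_nonneg z]
    have hy0 : y = 0 := by nlinarith [sq_nonneg x, sq_nonneg y, sq_nonneg z]
    have hz0 : z = 0 := by nlinarith [sq_nonneg x, sq_nonneg y, sq_nonneg z]
    have hw2 : (w - 1) * (w + 1) = 0 := by nlinarith
    have hpu : (![1,0,0] : Fin 3 → ℝ) ⬝ᵥ ![1,0,0] = 1 := by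
      simp [dotProduct, Fin.sum_univ_three]
    have hb0 : b = 0 := by rw [hbw, hy0, hx0]; simp
    have hc0 : cc = 0 := by rw [hcb, hb0]; simp
    rcases mul_eq_zero.mp hw2 with h | h
    · have hw1 : w = 1 := by linarith
      refine ⟨![1,0,0], 0, hpu, ?_⟩
      rw [Rot_zero, hVmat]
      have ha1 : a = 1 := by rw [haw, hw1, hz0]; simp
      have hd1 : d = 1 := by rw [hda, ha1]; simp
      rw [ha1, hb0, hc0, hd1]
      ext i j
      fin_cases i <;> fin_cases j <;> simp [Matrix.one_apply]
    · have hw1 : w = -1 := by linarith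
      refine ⟨![1,0,0], 2*π, hpu, ?_⟩
      rw [Rot_two_pi, hVmat]
      have ha1 : a = -1 := by rw [haw, hw1, hz0]; push_cast; simp
      have hd1 : d = -1 := by rw [hda, ha1]; simp
      rw [ha1, hb0, hc0, hd1]
      ext i j
      fin_cases i <;> fin_cases j <;> simp [Matrix.one_apply]
  · have hpos : 0 < x^2 + y^2 + z^2 := lt_of_le_of_ne (by positivity) (Ne.symm h0)
    set r := Real.sqrt (x^2 + y^2 + z^2) with hrdef
    have hrpos : 0 < r := Real.sqrt_pos.mpr hpos
    have hrne : r ≠ 0 := ne_of_gt hrpos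
    have hr2 : r^2 = x^2 + y^2 + z^2 := Real.sq_sqrt (le_of_lt hpos)
    set p : Fin 3 → ℝ := ![x/r, y/r, z/r] with hpdef
    have hpu : p ⬝ᵥ p = 1 := by
      simp only [hpdef, dotProduct, Fin.sum_univ_three, Matrix.cons_val_zero,
        Matrix.cons_val_one, Matrix.head_cons, Matrix.cons_val_two, Matrix.tail_cons]
      field_simp
      linarith [hr2]
    have hwle : -1 ≤ w ∧ w ≤ 1 := by
      constructor <;> nlinarith [sq_nonneg x, sq_nonneg y, sq_nonneg z]
    set ψ := 2 * Real.arccos w with hψdef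
    have hhalf : ψ/2 = Real.arccos w := by rw [hψdef]; ring
    have hcosψ : Real.cos (ψ/2) = w := by rw [hhalf]; exact Real.cos_arccos hwle.1 hwle.2
    have hsinψ : Real.sin (ψ/2) = r := by
      rw [hhalf, Real.sin_arccos, hrdef]
      congr 1
      linarith [hnorm]
    have hrC : (r : ℂ) ≠ 0 := by exact_mod_cast hrne
    have hdσ : dotσ p = !![((z/r : ℝ) : ℂ), ((x/r : ℝ) : ℂ) - ((y/r : ℝ) : ℂ) * Complex.I;
        ((x/r : ℝ) : ℂ) + ((y/r : ℝ) : ℂ) * Complex.I, -((z/r : ℝ) : ℂ)] := by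
      rw [dotσ_eq]
      have hp0 : p 0 = x/r := rfl
      have hp1 : p 1 = y/r := rfl
      have hp2 : p 2 = z/r := rfl
      rw [hp0, hp1, hp2]
    have hone : (1 : Matrix (Fin 2) (Fin 2) ℂ) = !![1, 0; 0, 1] := by
      ext i j
      fin_cases i <;> fin_cases j <;> simp [Matrix.one_apply]
    have hRHS : ((Real.cos (ψ/2) : ℝ) : ℂ) • (1 : Matrix (Fin 2) (Fin 2) ℂ)
        - (Complex.I * ((Real.sin (ψ/2) : ℝ) : ℂ)) • dotσ p
        = !![(w:ℂ) - (z:ℂ)*Complex.I, -(y:ℂ) - (x:ℂ)*Complex.I;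
             (y:ℂ) - (x:ℂ)*Complex.I, (w:ℂ) + (z:ℂ)*Complex.I] := by
      rw [hcosψ, hsinψ, hdσ]
      exact su2_entry_helper w x y z r hrne
    have hccw : cc = (y:ℂ) - (x:ℂ)*Complex.I := by
      rw [hcb, hbw]
      simp [map_sub, map_neg, _root_.map_mul, Complex.conj_ofReal, Complex.conj_I]
      ring
    have hdw : d = (w:ℂ) + (z:ℂ)*Complex.I := by
      rw [hda, haw]
      simp [map_sub, _root_.map_mul, Complex.conj_ofReal, Complex.conj_I]
      try ring
    refine ⟨p, ψ, hpu, ?_⟩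
    rw [Rot, hRHS, hVmat, haw, hbw, hccw, hdw]

theorem unitary_decomposition_two_axes (n m : Fin 3 → ℝ)
    (hn : n 0 ^ 2 + n 1 ^ 2 + n 2 ^ 2 = 1)
    (hm : m 0 ^ 2 + m 1 ^ 2 + m 2 ^ 2 = 1)
    (hnm : n ≠ m) (hnm' : n ≠ -m)
    (U : Matrix (Fin 2) (Fin 2) ℂ) (hU : U ∈ Matrix.unitaryGroup (Fin 2) ℂ) :
    ∃ (α : ℝ) (k : ℕ) (β γ : Fin k → ℝ),
      U = Complex.exp (Complex.I * (α : ℂ)) •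
        (List.ofFn (fun i : Fin k => Rot n (β i) * Rot m (γ i))).prod := by
  have hn' : n ⬝ᵥ n = 1 := by
    simp only [dotProduct, Fin.sum_univ_three]
    linear_combination hn
  have hm' : m ⬝ᵥ m = 1 := by
    simp only [dotProduct, Fin.sum_univ_three]
    linear_combination hm
  have hc := nonparallel_dot n m hn' hm' hnm hnm'
  have h1 : (starRingEnd ℂ) U.det * U.det = 1 := (Matrix.det_of_mem_unitary hU).1
  have habs : ‖U.det‖ = 1 := by
    have h2 : ((Complex.normSq U.det : ℝ) : ℂ) = 1 := by
      rw [← Complex.mul_conj, mul_comm]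
      exact h1
    have h3 : Complex.normSq U.det = 1 := by exact_mod_cast h2
    rw [Complex.norm_def, h3, Real.sqrt_one]
  set δ : ℝ := (Complex.arg U.det)/2 with hδ
  have hdetU : U.det = Complex.exp (Complex.I * ((2*δ : ℝ) : ℂ)) := by
    have h4 := Complex.norm_mul_exp_arg_mul_I U.det
    rw [habs] at h4
    have harg : Complex.I * ((2*δ : ℝ) : ℂ) = (U.det.arg : ℂ) * Complex.I := by
      rw [hδ]; push_cast; ring
    rw [harg]
    have h5 := h4.symm
    push_cast at h5
    simpa using h5
  set e : ℂ := Complex.exp (Complex.I * (δ : ℂ)) with he'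
  have he : e ≠ 0 := Complex.exp_ne_zero _
  have hee : e * e = U.det := by
    rw [he', ← Complex.exp_add, hdetU]
    congr 1
    push_cast
    ring
  have hconj : (starRingEnd ℂ) e * e = 1 := by
    rw [he', ← Complex.exp_conj, ← Complex.exp_add]
    have : (starRingEnd ℂ) (Complex.I * (δ : ℂ)) = -(Complex.I * (δ : ℂ)) := by
      simp [_root_.map_mul, Complex.conj_I, Complex.conj_ofReal]
    rw [this, neg_add_cancel, Complex.exp_zero]
  have hstare : (starRingEnd ℂ) e = e⁻¹ := eq_inv_of_mul_eq_one_left hconj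
  set V : Matrix (Fin 2) (Fin 2) ℂ := e⁻¹ • U with hV
  have hU' : Uᴴ * U = 1 := by
    have := Matrix.mem_unitaryGroup_iff'.mp hU
    rwa [Matrix.star_eq_conjTranspose] at this
  have hV1 : Vᴴ * V = 1 := by
    rw [hV, Matrix.conjTranspose_smul]
    have hse : star (e⁻¹) = e := by
      rw [star_inv₀]
      rw [show star e = (starRingEnd ℂ) e from rfl, hstare, inv_inv]
    rw [hse, smul_mul_assoc, mul_smul_comm, smul_smul, hU']
    rw [mul_inv_cancel₀ he, one_smul]
  have hd0 : U.det ≠ 0 := by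
    intro h
    rw [h] at habs
    simp at habs
  have hVdet : V.det = 1 := by
    rw [hV, Matrix.det_smul]
    simp only [Fintype.card_fin]
    rw [inv_pow, pow_two, hee]
    exact inv_mul_cancel₀ hd0
  obtain ⟨p, ψ, hpu, hVrot⟩ := su2_param V hV1 hVdet
  obtain ⟨l, hl⟩ := Orb_Rot n m p (orbit n m hn' hm' hc p hpu) ψ
  have hUV : U = e • V := by
    rw [hV, smul_smul, mul_inv_cancel₀ he, one_smul]
  refine ⟨δ, l.length, fun i => (l.get i).1, fun i => (l.get i).2, ?_⟩
  have hofn : List.ofFn (fun i : Fin l.length => Rot n ((l.get i).1) * Rot m ((l.get i).2))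
      = l.map (fun p => Rot n p.1 * Rot m p.2) := by
    have h5 : (fun i : Fin l.length => Rot n ((l.get i).1) * Rot m ((l.get i).2))
        = (fun p : ℝ × ℝ => Rot n p.1 * Rot m p.2) ∘ l.get := rfl
    calc List.ofFn (fun i : Fin l.length => Rot n ((l.get i).1) * Rot m ((l.get i).2))
        = (List.ofFn l.get).map (fun p => Rot n p.1 * Rot m p.2) := by
          rw [h5]; exact List.map_ofFn.symm
      _ = l.map (fun p => Rot n p.1 * Rot m p.2) := by rw [List.ofFn_get]
  rw [hofn, hUV, hVrot, hl]
  rfl
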